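/- Let N = n and let f₁, ..., f_n be i.i.d. random vectors, each uniformly distributed on the canonical basis {e₁, ..., e_n} of ℂ^n. Then E ∘ tr (f₁ ⊗ f₁ + ... + f_n ⊗ f_n)^p → B_p as n → ∞, where B_p is the p-th Bell number. -/

import Mathlib

open MeasureTheory ProbabilityTheory Filter Finset
open scoped InnerProductSpace

/-- The rank-one operator `u ⊗ v : x ↦ ⟨x, v⟩ u` (inner product conjugate-linear
in the second argument, i.e. `⟪v, x⟫` in Mathlib's convention). -/
noncomputable def rankOne {n : ℕ} (u v : EuclideanSpace ℂ (Fin n)) :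
    EuclideanSpace ℂ (Fin n) →L[ℂ] EuclideanSpace ℂ (Fin n) :=
  (innerSL ℂ v).smulRight u

/-- The `p`-th Bell number: the number of set partitions of `{1, …, p}`. -/
noncomputable def bell (p : ℕ) : ℕ :=
  Nat.card (Finpartition (Finset.univ : Finset (Fin p)))

variable {n p : ℕ}

/-- basis vector -/
noncomputable abbrev ee (j : Fin n) : EuclideanSpace ℂ (Fin n) := EuclideanSpace.single j (1:ℂ)

lemma rankOne_apply (u v x : EuclideanSpace ℂ (Fin n)) : rankOne u v x = ⟪v, x⟫_ℂ • u := by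
  simp [rankOne]

/-- multiplicity -/
def cnt (g : Fin n → Fin n) (j : Fin n) : ℕ := (univ.filter fun i => g i = j).card

lemma sum_rankOne_apply (g : Fin n → Fin n) (j : Fin n) :
    (∑ i : Fin n, rankOne (ee (g i)) (ee (g i))) (ee j) = (cnt g j : ℂ) • ee j := by
  rw [ContinuousLinearMap.sum_apply]
  have : ∀ i : Fin n, rankOne (ee (g i)) (ee (g i)) (ee j)
      = if g i = j then ee j else 0 := by
    intro i
    rw [rankOne_apply]
    by_cases h : g i = j
    · simp [h, EuclideanSpace.inner_single_left, EuclideanSpace.single_apply]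
    · simp [h, EuclideanSpace.inner_single_left, EuclideanSpace.single_apply, Ne.symm h]
  simp_rw [this]
  rw [Finset.sum_ite, Finset.sum_const, Finset.sum_const_zero, add_zero, cnt, Nat.cast_smul_eq_nsmul]

lemma pow_sum_rankOne_apply (g : Fin n → Fin n) (j : Fin n) (q : ℕ) :
    ((∑ i : Fin n, rankOne (ee (g i)) (ee (g i))) ^ q) (ee j) = ((cnt g j : ℂ) ^ q) • ee j := by
  induction q with
  | zero => simp
  | succ q ih =>
      rw [pow_succ, ContinuousLinearMap.mul_apply, sum_rankOne_apply, _root_.map_smul, ih,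
        smul_smul, ← pow_succ']

lemma trace_pow (g : Fin n → Fin n) :
    LinearMap.trace ℂ (EuclideanSpace ℂ (Fin n))
      (((∑ i : Fin n, rankOne (ee (g i)) (ee (g i))) ^ p :
        EuclideanSpace ℂ (Fin n) →L[ℂ] EuclideanSpace ℂ (Fin n)))
      = ∑ j : Fin n, (cnt g j : ℂ) ^ p := by
  classical
  set b := (EuclideanSpace.basisFun (Fin n) ℂ).toBasis
  rw [LinearMap.trace_eq_matrix_trace ℂ b, Matrix.trace]
  congr 1
  ext j
  rw [Matrix.diag_apply, LinearMap.toMatrix_apply]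
  have hb : b j = ee j := by
    simp [b, EuclideanSpace.basisFun_apply]
  rw [hb]
  have : ((∑ i : Fin n, rankOne (ee (g i)) (ee (g i))) ^ p :
        EuclideanSpace ℂ (Fin n) →L[ℂ] EuclideanSpace ℂ (Fin n)) (ee j)
      = ((cnt g j : ℂ) ^ p) • ee j := pow_sum_rankOne_apply g j p
  erw [this]
  rw [_root_.map_smul]
  simp [b, EuclideanSpace.single_apply]

lemma inner_count (hn : n ≠ 0) (s : Finset (Fin n)) (j : Fin n) :
    ∑ g : Fin n → Fin n, ∏ i ∈ s, (if g i = j then (1:ℂ) else 0) = (n:ℂ) ^ (n - s.card) := by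
  classical
  have h1 : ∀ g : Fin n → Fin n, ∏ i ∈ s, (if g i = j then (1:ℂ) else 0)
      = ∏ i : Fin n, (if i ∈ s then (if g i = j then (1:ℂ) else 0) else 1) := by
    intro g
    rw [Finset.prod_ite_mem, Finset.univ_inter]
  simp_rw [h1]
  have h2 := Finset.prod_univ_sum (fun _ : Fin n => (univ : Finset (Fin n)))
    (fun i x => if i ∈ s then (if x = j then (1:ℂ) else 0) else 1)
  rw [Fintype.piFinset_univ] at h2
  rw [← h2]
  have h3 : ∀ i : Fin n, (∑ x : Fin n, if i ∈ s then (if x = j then (1:ℂ) else 0) else 1)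
      = if i ∈ s then 1 else (n : ℂ) := by
    intro i
    by_cases h : i ∈ s <;> simp [h]
  rw [Fintype.prod_congr _ _ h3, Finset.prod_ite, Finset.prod_const_one, one_mul,
    Finset.prod_const]
  congr 1
  have : filter (fun x => x ∉ s) univ = sᶜ := by
    ext i; simp
  rw [this, Finset.card_compl, Fintype.card_fin]

lemma count_pow (g : Fin n → Fin n) (j : Fin n) :
    (cnt g j : ℂ) ^ p
      = ∑ t : Fin p → Fin n, ∏ k : Fin p, (if g (t k) = j then (1:ℂ) else 0) := by
  classical
  have h0 : (cnt g j : ℂ) = ∑ i : Fin n, (if g i = j then (1:ℂ) else 0) := by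
    rw [Finset.sum_ite, Finset.sum_const, Finset.sum_const_zero, add_zero, cnt]
    simp
  rw [h0]
  have h1 : (∑ i : Fin n, (if g i = j then (1:ℂ) else 0)) ^ p
      = ∏ _k : Fin p, ∑ i : Fin n, (if g i = j then (1:ℂ) else 0) := by
    rw [Finset.prod_const, Finset.card_univ, Fintype.card_fin]
  rw [h1]
  have h2 := Finset.prod_univ_sum (fun _ : Fin p => (univ : Finset (Fin n)))
    (fun _ x => if g x = j then (1:ℂ) else 0)
  rw [Fintype.piFinset_univ] at h2
  rw [h2]

lemma prod_fiber (t : Fin p → Fin n) (P : Fin n → Prop) [DecidablePred P] :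
    ∏ k : Fin p, (if P (t k) then (1:ℂ) else 0)
      = ∏ i ∈ Finset.image t univ, (if P i then (1:ℂ) else 0) := by
  classical
  rw [Finset.prod_comp (fun i => if P i then (1:ℂ) else 0) t]
  apply Finset.prod_congr rfl
  intro i hi
  obtain ⟨k, _, hk⟩ := Finset.mem_image.mp hi
  have hpos : 0 < #{a ∈ (univ : Finset (Fin p)) | t a = i} := by
    rw [Finset.card_pos]
    exact ⟨k, by simp [hk]⟩
  by_cases h : P i
  · simp [h]
  · simp [h, zero_pow hpos.ne']

lemma expectation_eq (hn : n ≠ 0) :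
    ((n:ℂ)⁻¹)^n * ∑ g : Fin n → Fin n, ((n:ℂ)⁻¹ * ∑ j : Fin n, (cnt g j : ℂ) ^ p)
      = ∑ t : Fin p → Fin n, ((n:ℂ) ^ (Finset.image t univ).card)⁻¹ := by
  classical
  have hn' : (n:ℂ) ≠ 0 := Nat.cast_ne_zero.mpr hn
  simp_rw [count_pow (p := p), ← Finset.mul_sum]
  have key : (∑ g : Fin n → Fin n, ∑ j : Fin n, ∑ t : Fin p → Fin n,
        ∏ k : Fin p, (if g (t k) = j then (1:ℂ) else 0))
      = ∑ t : Fin p → Fin n, (n:ℂ) * (n:ℂ) ^ (n - (Finset.image t univ).card) := by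
    calc (∑ g : Fin n → Fin n, ∑ j : Fin n, ∑ t : Fin p → Fin n,
            ∏ k : Fin p, (if g (t k) = j then (1:ℂ) else 0))
        = ∑ j : Fin n, ∑ t : Fin p → Fin n, ∑ g : Fin n → Fin n,
            ∏ k : Fin p, (if g (t k) = j then (1:ℂ) else 0) := by
          rw [Finset.sum_comm]
          exact Finset.sum_congr rfl fun j _ => Finset.sum_comm
      _ = ∑ j : Fin n, ∑ t : Fin p → Fin n, (n:ℂ) ^ (n - (Finset.image t univ).card) := by
          refine Finset.sum_congr rfl fun j _ => Finset.sum_congr rfl fun t _ => ?_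
          have h1 : ∀ g : Fin n → Fin n, (∏ k : Fin p, (if g (t k) = j then (1:ℂ) else 0))
              = ∏ i ∈ Finset.image t univ, (if g i = j then (1:ℂ) else 0) :=
            fun g => prod_fiber t (fun i => g i = j)
          simp_rw [h1]
          exact inner_count hn _ j
      _ = ∑ t : Fin p → Fin n, ∑ j : Fin n, (n:ℂ) ^ (n - (Finset.image t univ).card) :=
          Finset.sum_comm
      _ = _ := by
          refine Finset.sum_congr rfl fun t _ => ?_
          rw [Finset.sum_const, Finset.card_univ, Fintype.card_fin, nsmul_eq_mul]
  rw [key, Finset.mul_sum, Finset.mul_sum]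
  refine Finset.sum_congr rfl fun t _ => ?_
  have hk : (Finset.image t univ).card ≤ n := by
    simpa using Finset.card_le_card (Finset.subset_univ (Finset.image t univ))
  rw [pow_sub₀ _ hn' hk]
  field_simp
  rw [one_div, ← mul_pow, inv_mul_cancel₀ hn', one_pow]

section Partition
variable {p n : ℕ}

instance kerDec (t : Fin p → Fin n) : DecidableRel (Setoid.ker t).r :=
  fun a b => inferInstanceAs (Decidable (t a = t b))

def kerPart (t : Fin p → Fin n) : Finpartition (univ : Finset (Fin p)) :=
  Finpartition.ofSetoid (Setoid.ker t)

lemma mem_kerPart {t : Fin p → Fin n} {x y : Fin p} :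
    y ∈ (kerPart t).part x ↔ t x = t y :=
  Finpartition.mem_part_ofSetoid_iff_rel

lemma parts_eq_image {α : Type*} [Fintype α] [DecidableEq α]
    (P : Finpartition (univ : Finset α)) :
    P.parts = Finset.image P.part univ := by
  ext b
  constructor
  · intro hb
    obtain ⟨x, hx⟩ := P.nonempty_of_mem_parts hb
    exact Finset.mem_image.mpr ⟨x, Finset.mem_univ x, P.part_eq_of_mem hb hx⟩
  · rintro hb
    obtain ⟨x, _, rfl⟩ := Finset.mem_image.mp hb
    exact P.part_mem.2 (Finset.mem_univ x)

lemma card_image_eq_card_parts (t : Fin p → Fin n) :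
    (Finset.image t univ).card = (kerPart t).parts.card := by
  classical
  refine (Finset.card_bij
    (fun b hb => t ((kerPart t).nonempty_of_mem_parts hb).choose) ?_ ?_ ?_).symm
  · intro b hb
    exact Finset.mem_image.mpr ⟨_, Finset.mem_univ _, rfl⟩
  · intro b1 hb1 b2 hb2 h
    set x1 := ((kerPart t).nonempty_of_mem_parts hb1).choose with hx1d
    set x2 := ((kerPart t).nonempty_of_mem_parts hb2).choose with hx2d
    have hx1 : x1 ∈ b1 := ((kerPart t).nonempty_of_mem_parts hb1).choose_spec
    have hx2 : x2 ∈ b2 := ((kerPart t).nonempty_of_mem_parts hb2).choose_spec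
    have hb1' : b1 = (kerPart t).part x1 := ((kerPart t).part_eq_of_mem hb1 hx1).symm
    have : x2 ∈ (kerPart t).part x1 := mem_kerPart.mpr h
    exact (kerPart t).eq_of_mem_parts hb1 hb2 (hb1' ▸ this) hx2
  · intro j hj
    obtain ⟨x, _, rfl⟩ := Finset.mem_image.mp hj
    have hpm : (kerPart t).part x ∈ (kerPart t).parts :=
      (kerPart t).part_mem.2 (Finset.mem_univ x)
    refine ⟨(kerPart t).part x, hpm, ?_⟩
    have hc : ((kerPart t).nonempty_of_mem_parts hpm).choose ∈ (kerPart t).part x :=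
      ((kerPart t).nonempty_of_mem_parts hpm).choose_spec
    exact (mem_kerPart.mp hc).symm

end Partition

section Fiber
variable {p n : ℕ}

lemma kerPart_part_eq (π : Finpartition (univ : Finset (Fin p))) (e : π.parts ↪ Fin n)
    (x : Fin p) :
    (kerPart (fun y => e ⟨π.part y, π.part_mem.2 (Finset.mem_univ y)⟩)).part x = π.part x := by
  ext y
  rw [mem_kerPart]
  constructor
  · intro h
    have hpart : π.part x = π.part y := congrArg Subtype.val (e.injective h)
    exact hpart ▸ π.mem_part (Finset.mem_univ y)
  · intro h
    have : π.part y = π.part x := π.part_eq_of_mem (π.part_mem.2 (Finset.mem_univ x)) h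
    simp only [this]

noncomputable def fiberEquiv (π : Finpartition (univ : Finset (Fin p))) :
    {t : Fin p → Fin n // kerPart t = π} ≃ (π.parts ↪ Fin n) where
  toFun t := ⟨fun b => t.1 (π.nonempty_of_mem_parts b.2).choose, by
    rintro ⟨b1, hb1⟩ ⟨b2, hb2⟩ h
    simp only at h
    have hx1 : (π.nonempty_of_mem_parts hb1).choose ∈ b1 :=
      (π.nonempty_of_mem_parts hb1).choose_spec
    have hx2 : (π.nonempty_of_mem_parts hb2).choose ∈ b2 :=
      (π.nonempty_of_mem_parts hb2).choose_spec
    have hb1p : b1 ∈ (kerPart t.1).parts := by rw [t.2]; exact hb1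
    have hb2p : b2 ∈ (kerPart t.1).parts := by rw [t.2]; exact hb2
    have hb1' : b1 = (kerPart t.1).part (π.nonempty_of_mem_parts hb1).choose :=
      ((kerPart t.1).part_eq_of_mem hb1p hx1).symm
    have hmem : (π.nonempty_of_mem_parts hb2).choose
        ∈ (kerPart t.1).part (π.nonempty_of_mem_parts hb1).choose := mem_kerPart.mpr h
    have hmem' : (π.nonempty_of_mem_parts hb2).choose ∈ b1 := by rw [hb1']; exact hmem
    exact Subtype.ext ((kerPart t.1).eq_of_mem_parts hb1p hb2p hmem' hx2)⟩
  invFun e := ⟨fun y => e ⟨π.part y, π.part_mem.2 (Finset.mem_univ y)⟩, by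
    apply Finpartition.ext
    rw [parts_eq_image]
    conv_rhs => rw [parts_eq_image π]
    apply Finset.image_congr
    intro x _
    exact kerPart_part_eq π e x⟩
  left_inv := by
    rintro ⟨t, rfl⟩
    apply Subtype.ext
    funext x
    simp only
    set b : Finset (Fin p) := (kerPart t).part x with hbd
    have hbm : b ∈ (kerPart t).parts := (kerPart t).part_mem.2 (Finset.mem_univ x)
    have hc : ((kerPart t).nonempty_of_mem_parts hbm).choose ∈ (kerPart t).part x :=
      ((kerPart t).nonempty_of_mem_parts hbm).choose_spec
    exact (mem_kerPart.mp hc).symm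
  right_inv := by
    intro e
    apply DFunLike.ext
    rintro ⟨b, hb⟩
    simp only
    have hc : (π.nonempty_of_mem_parts hb).choose ∈ b := (π.nonempty_of_mem_parts hb).choose_spec
    have : π.part (π.nonempty_of_mem_parts hb).choose = b := π.part_eq_of_mem hb hc
    exact congrArg e (Subtype.ext this)

lemma card_fiber (π : Finpartition (univ : Finset (Fin p))) :
    Fintype.card {t : Fin p → Fin n // kerPart t = π} = n.descFactorial π.parts.card := by
  rw [Fintype.card_congr (fiberEquiv π), Fintype.card_embedding_eq, Fintype.card_coe,
    Fintype.card_fin]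

end Fiber

lemma sum_group {p n : ℕ} (F : ℕ → ℂ) :
    ∑ t : Fin p → Fin n, F ((Finset.image t univ).card)
      = ∑ π : Finpartition (univ : Finset (Fin p)),
          (n.descFactorial π.parts.card : ℂ) * F π.parts.card := by
  classical
  rw [← Finset.sum_fiberwise univ (fun t : Fin p → Fin n => kerPart t)
    (fun t => F ((Finset.image t univ).card))]
  refine Finset.sum_congr rfl fun π _ => ?_
  have h1 : ∀ t ∈ univ.filter (fun t : Fin p → Fin n => kerPart t = π),
      F ((Finset.image t univ).card) = F π.parts.card := by
    intro t ht
    have := (Finset.mem_filter.mp ht).2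
    rw [card_image_eq_card_parts, this]
  rw [Finset.sum_congr rfl h1, Finset.sum_const, nsmul_eq_mul]
  congr 1
  rw [← card_fiber (n := n) π, Fintype.card_subtype]

lemma tendsto_ratio (k : ℕ) :
    Tendsto (fun n : ℕ => (n.descFactorial k : ℂ) * ((n:ℂ) ^ k)⁻¹) atTop (nhds 1) := by
  have hre : Tendsto (fun n : ℕ => ((n.descFactorial k : ℝ) / (n:ℝ) ^ k)) atTop (nhds 1) := by
    have h1 : Tendsto (fun n : ℕ => ∏ i ∈ Finset.range k, (1 - (i:ℝ)/n)) atTop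
        (nhds (∏ i ∈ Finset.range k, 1)) := by
      refine tendsto_finset_prod _ fun i _ => ?_
      have := (tendsto_const_nhds (x := (1:ℝ)) (f := atTop)).sub
        (tendsto_const_div_atTop_nhds_zero_nat (i:ℝ))
      simpa using this
    rw [Finset.prod_const_one] at h1
    refine h1.congr' ?_
    filter_upwards [eventually_ge_atTop k] with n hn
    rcases Nat.eq_zero_or_pos k with hk | hk
    · subst hk; simp
    · have hnpos : 0 < n := lt_of_lt_of_le hk hn
      have hn0 : (n:ℝ) ≠ 0 := Nat.cast_ne_zero.mpr hnpos.ne'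
      rw [Nat.descFactorial_eq_prod_range, Nat.cast_prod]
      have hpk : (n:ℝ)^k = ∏ _i ∈ Finset.range k, (n:ℝ) := by
        rw [Finset.prod_const, Finset.card_range]
      rw [hpk, ← Finset.prod_div_distrib]
      refine Finset.prod_congr rfl fun i hi => ?_
      have hin : i ≤ n := le_of_lt (lt_of_lt_of_le (Finset.mem_range.mp hi) hn)
      rw [Nat.cast_sub hin, sub_div, div_self hn0]
  have := (Complex.continuous_ofReal.tendsto 1).comp hre
  refine this.congr' ?_
  filter_upwards [] with n
  simp only [Function.comp_apply]
  push_cast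
  rw [div_eq_mul_inv]

lemma tendsto_main (p : ℕ) :
    Tendsto (fun n : ℕ => ∑ t : Fin p → Fin n, ((n:ℂ) ^ (Finset.image t univ).card)⁻¹) atTop
      (nhds ((bell p : ℂ))) := by
  classical
  have h : Tendsto (fun n : ℕ => ∑ π : Finpartition (univ : Finset (Fin p)),
      ((n.descFactorial π.parts.card : ℂ) * ((n:ℂ) ^ π.parts.card)⁻¹)) atTop
      (nhds (∑ _π : Finpartition (univ : Finset (Fin p)), (1:ℂ))) :=
    tendsto_finset_sum _ fun π _ => tendsto_ratio _
  rw [Finset.sum_const, nsmul_eq_mul, mul_one, Finset.card_univ] at h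
  have hb : ((Fintype.card (Finpartition (univ : Finset (Fin p)))) : ℂ) = (bell p : ℂ) := by
    rw [bell, Nat.card_eq_fintype_card]
  rw [hb] at h
  refine h.congr fun n => ?_
  exact (sum_group fun k => ((n:ℂ) ^ k)⁻¹).symm

section Prob
variable {p : ℕ}

lemma integral_eq_sum {n : ℕ} (hn : n ≠ 0) {Ωn : Type} [MeasureSpace Ωn]
    [IsProbabilityMeasure (volume : Measure Ωn)]
    [mE : MeasurableSpace (EuclideanSpace ℂ (Fin n))]
    [BorelSpace (EuclideanSpace ℂ (Fin n))]
    (f : Fin n → Ωn → EuclideanSpace ℂ (Fin n))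
    (hmeas : ∀ i, Measurable (f i))
    (hindep : iIndepFun (m := fun _ => mE) f volume)
    (hunif : ∀ i j : Fin n, volume {ω | f i ω = EuclideanSpace.single j (1:ℂ)} = (n:ENNReal)⁻¹) :
    ∫ ω, (n:ℂ)⁻¹ * LinearMap.trace ℂ (EuclideanSpace ℂ (Fin n))
        (((∑ i : Fin n, rankOne (f i ω) (f i ω)) ^ p :
          EuclideanSpace ℂ (Fin n) →L[ℂ] EuclideanSpace ℂ (Fin n)))
      = (((n:ℝ)⁻¹)^n) • ∑ g : Fin n → Fin n, ((n:ℂ)⁻¹ * ∑ j : Fin n, (cnt g j : ℂ) ^ p) := by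
  classical
  set A : Fin n → Fin n → Set Ωn := fun i j => f i ⁻¹' {EuclideanSpace.single j 1} with hAdef
  have hA : ∀ i j, MeasurableSet (A i j) := fun i j =>
    hmeas i (isClosed_singleton.measurableSet)
  set Eg : (Fin n → Fin n) → Set Ωn := fun g => ⋂ i, A i (g i) with hEgdef
  have hEg_meas : ∀ g, MeasurableSet (Eg g) := fun g => MeasurableSet.iInter fun i => hA _ _
  have hEg_vol : ∀ g, volume (Eg g) = ((n:ENNReal)⁻¹)^n := by
    intro g
    rw [hindep.meas_iInter fun i =>
      ⟨{EuclideanSpace.single (g i) 1}, isClosed_singleton.measurableSet, rfl⟩]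
    have : ∀ i, volume (A i (g i)) = (n:ENNReal)⁻¹ := fun i => hunif i (g i)
    refine (Finset.prod_congr rfl fun i _ => this i).trans ?_
    rw [Finset.prod_const, Finset.card_univ, Fintype.card_fin]
  -- singles are distinct
  have hsingle_ne : ∀ j j' : Fin n, j ≠ j' →
      (EuclideanSpace.single j (1:ℂ)) ≠ EuclideanSpace.single j' 1 := by
    intro j j' hjj' h
    have := congrArg (fun v => v j) h
    simp [EuclideanSpace.single_apply, hjj'] at this
  have hAdisj : ∀ i, ∀ j j' : Fin n, j ≠ j' → Disjoint (A i j) (A i j') := by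
    intro i j j' hjj'
    apply Set.disjoint_left.mpr
    intro ω h1 h2
    exact hsingle_ne j j' hjj' ((Set.mem_preimage.mp h1).symm.trans (Set.mem_preimage.mp h2))
  have hcover : ∀ i, volume (⋃ j, A i j) = 1 := by
    intro i
    rw [measure_iUnion (fun j j' hjj' => hAdisj i j j' hjj') (fun j => hA i j)]
    have hAv : ∀ j : Fin n, volume (A i j) = (n:ENNReal)⁻¹ := fun j => hunif i j
    simp_rw [hAv]
    rw [tsum_fintype, Finset.sum_const, Finset.card_univ, Fintype.card_fin, nsmul_eq_mul,
      ENNReal.mul_inv_cancel (by exact_mod_cast hn) (ENNReal.natCast_ne_top n)]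
  have hGc : volume ((⋃ g : Fin n → Fin n, Eg g)ᶜ) = 0 := by
    have hsub : (⋃ g : Fin n → Fin n, Eg g)ᶜ ⊆ ⋃ i, (⋃ j, A i j)ᶜ := by
      intro ω hω
      by_contra hcon
      simp only [Set.mem_iUnion, Set.mem_compl_iff, not_exists, not_not] at hcon
      have : ∀ i, ∃ j, ω ∈ A i j := by
        intro i
        have := hcon i
        simpa [Set.mem_iUnion] using this
      choose g hg using this
      exact hω (Set.mem_iUnion.mpr ⟨g, Set.mem_iInter.mpr hg⟩)
    refine measure_mono_null hsub (measure_iUnion_null fun i => ?_)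
    rw [measure_compl (MeasurableSet.iUnion fun j => hA i j) (by simp), hcover i]
    simp
  set T : (Fin n → Fin n) → ℂ :=
    fun g => (n:ℂ)⁻¹ * ∑ j : Fin n, (cnt g j : ℂ) ^ p with hTdef
  have hae : (fun ω => (n:ℂ)⁻¹ * LinearMap.trace ℂ (EuclideanSpace ℂ (Fin n))
        (((∑ i : Fin n, rankOne (f i ω) (f i ω)) ^ p :
          EuclideanSpace ℂ (Fin n) →L[ℂ] EuclideanSpace ℂ (Fin n))))
      =ᵐ[volume] (fun ω => ∑ g : Fin n → Fin n, Set.indicator (Eg g) (fun _ => T g) ω) := by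
    have hmem : ∀ᵐ ω ∂volume, ω ∈ ⋃ g : Fin n → Fin n, Eg g := by
      rw [ae_iff]
      exact hGc
    filter_upwards [hmem] with ω hω
    obtain ⟨g, hg⟩ := Set.mem_iUnion.mp hω
    have hfg : ∀ i, f i ω = EuclideanSpace.single (g i) 1 := by
      intro i
      exact Set.mem_preimage.mp (Set.mem_iInter.mp hg i)
    have hL : (n:ℂ)⁻¹ * LinearMap.trace ℂ (EuclideanSpace ℂ (Fin n))
        (((∑ i : Fin n, rankOne (f i ω) (f i ω)) ^ p :
          EuclideanSpace ℂ (Fin n) →L[ℂ] EuclideanSpace ℂ (Fin n))) = T g := by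
      simp_rw [hfg]
      rw [trace_pow]
    rw [hL]
    have hR : ∀ g' : Fin n → Fin n, Set.indicator (Eg g') (fun _ => T g') ω
        = if g' = g then T g else 0 := by
      intro g'
      by_cases h : g' = g
      · subst h
        rw [if_pos rfl, Set.indicator_of_mem hg]
      · rw [if_neg h]
        apply Set.indicator_of_notMem
        intro hg'
        obtain ⟨i, hi⟩ := Function.ne_iff.mp h
        have h1 : f i ω = EuclideanSpace.single (g' i) 1 :=
          Set.mem_preimage.mp (Set.mem_iInter.mp hg' i)
        exact hsingle_ne _ _ hi ((h1.symm.trans (hfg i)))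
    rw [Finset.sum_congr rfl fun g' _ => hR g', Finset.sum_ite_eq' univ g (fun _ => T g),
      if_pos (Finset.mem_univ g)]
  rw [integral_congr_ae hae, integral_finset_sum _
    (fun g _ => (integrable_const (T g)).indicator (hEg_meas g))]
  have : ∀ g : Fin n → Fin n, ∫ ω, Set.indicator (Eg g) (fun _ => T g) ω
      = (((n:ℝ)⁻¹)^n) • T g := by
    intro g
    rw [integral_indicator_const _ (hEg_meas g), measureReal_def, hEg_vol g]
    congr 1
    rw [ENNReal.toReal_pow, ENNReal.toReal_inv]
    simp
  rw [Finset.sum_congr rfl fun g _ => this g, ← Finset.smul_sum]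

end Prob


theorem stmt15 (p : ℕ)
    (Ω : ℕ → Type) (_ : ∀ n, MeasureSpace (Ω n))
    (_ : ∀ n, IsProbabilityMeasure (volume : Measure (Ω n)))
    (inst : ∀ n, MeasurableSpace (EuclideanSpace ℂ (Fin n)))
    (_ : ∀ n, BorelSpace (EuclideanSpace ℂ (Fin n)))
    (f : ∀ n, Fin n → Ω n → EuclideanSpace ℂ (Fin n))
    (hmeas : ∀ n i, Measurable (f n i))
    (hindep : ∀ n, iIndepFun (m := fun _ => inst n) (f n) volume)
    (hunif : ∀ n, ∀ i : Fin n, ∀ j : Fin n,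
      volume {ω | f n i ω = EuclideanSpace.single j (1 : ℂ)} = (n : ENNReal)⁻¹) :
    Tendsto (fun n : ℕ => ∫ ω, (n : ℂ)⁻¹ * LinearMap.trace ℂ (EuclideanSpace ℂ (Fin n))
        (((∑ i : Fin n, rankOne (f n i ω) (f n i ω)) ^ p :
          EuclideanSpace ℂ (Fin n) →L[ℂ] EuclideanSpace ℂ (Fin n))))
      atTop (nhds ((bell p : ℂ))) := by
  rename_i hms hprob hborel
  have hkey : (fun n : ℕ =>
      (∫ ω, (n : ℂ)⁻¹ * LinearMap.trace ℂ (EuclideanSpace ℂ (Fin n))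
        (((∑ i : Fin n, rankOne (f n i ω) (f n i ω)) ^ p :
          EuclideanSpace ℂ (Fin n) →L[ℂ] EuclideanSpace ℂ (Fin n)))))
      =ᶠ[atTop] fun n : ℕ => ∑ t : Fin p → Fin n, ((n:ℂ) ^ (Finset.image t univ).card)⁻¹ := by
    filter_upwards [eventually_ge_atTop 1] with n hn
    have hn' : n ≠ 0 := by omega
    rw [integral_eq_sum (p := p) hn' (f n) (hmeas n) (hindep n) (hunif n)]
    have hsm : ((((n:ℝ)⁻¹)^n) • ∑ g : Fin n → Fin n, ((n:ℂ)⁻¹ * ∑ j : Fin n, (cnt g j : ℂ) ^ p))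
        = ((n:ℂ)⁻¹)^n * ∑ g : Fin n → Fin n, ((n:ℂ)⁻¹ * ∑ j : Fin n, (cnt g j : ℂ) ^ p) := by
      rw [Complex.real_smul]
      push_cast
      ring
    rw [hsm, expectation_eq hn']
  exact (tendsto_main p).congr' hkey.symm
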